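/- No wave triple resonance of the form ω₋ + ω₊ = ω₊ occurs: for every θ ∈ ℝ one has ω₋(θ) + ω₊(2θ) ≠ ω₊(3θ). -/

import Mathlib

set_option maxHeartbeats 1000000

/-- The optical dispersion branch of the diatomic chain. -/
noncomputable def omegaP (v11 v21 c1 c2 θ : ℝ) : ℝ :=
  Real.sqrt ((c1 + c2 + Real.sqrt ((c1 - c2) ^ 2 + 8 * v11 * v21 * (Real.cos θ + 1))) / 2)

/-- The acoustical dispersion branch of the diatomic chain. -/
noncomputable def omegaM (v11 v21 c1 c2 θ : ℝ) : ℝ :=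
  Real.sqrt ((c1 + c2 - Real.sqrt ((c1 - c2) ^ 2 + 8 * v11 * v21 * (Real.cos θ + 1))) / 2)

theorem no_triple_resonance (v11 v21 c1 c2 : ℝ)
    (hv : v11 * v21 > 0) (hsum : c1 + c2 > 0) (hprod : c1 * c2 > 4 * (v11 * v21))
    (hlt : c2 > c1) (θ : ℝ) :
    omegaM v11 v21 c1 c2 θ + omegaP v11 v21 c1 c2 (2 * θ) ≠
      omegaP v11 v21 c1 c2 (3 * θ) := by
  simp only [omegaM, omegaP]
  set S := c1 + c2 with hSdef
  set D1 := (c1 - c2) ^ 2 + 8 * v11 * v21 * (Real.cos θ + 1) with hD1def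
  set D2 := (c1 - c2) ^ 2 + 8 * v11 * v21 * (Real.cos (2 * θ) + 1) with hD2def
  set D3 := (c1 - c2) ^ 2 + 8 * v11 * v21 * (Real.cos (3 * θ) + 1) with hD3def
  set A := Real.sqrt ((S - Real.sqrt D1) / 2) with hAdef
  set B := Real.sqrt ((S + Real.sqrt D2) / 2) with hBdef
  set C := Real.sqrt ((S + Real.sqrt D3) / 2) with hCdef
  clear_value S D1 D2 D3 A B C
  apply ne_of_gt
  -- goal : C < A + B
  have hv' : (0:ℝ) < v11 * v21 := hv
  have hK : 0 < (c1 - c2) ^ 2 :=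
    pow_two_pos_of_ne_zero (sub_ne_zero_of_ne (ne_of_lt hlt))
  -- half-angle forms of the discriminants
  have hc1e : D1 = (c1 - c2) ^ 2 + 16 * (v11 * v21) * Real.cos (θ / 2) ^ 2 := by
    have h := Real.cos_sq (θ / 2)
    rw [show 2 * (θ / 2) = θ by ring] at h
    rw [hD1def]; linear_combination (-16 * (v11 * v21)) * h
  have hc2e : D2 = (c1 - c2) ^ 2 + 16 * (v11 * v21) * Real.cos θ ^ 2 := by
    have h := Real.cos_sq θ
    rw [hD2def]; linear_combination (-16 * (v11 * v21)) * h
  have hc3e : D3 = (c1 - c2) ^ 2 + 16 * (v11 * v21) * Real.cos (3 * θ / 2) ^ 2 := by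
    have h := Real.cos_sq (3 * θ / 2)
    rw [show 2 * (3 * θ / 2) = 3 * θ by ring] at h
    rw [hD3def]; linear_combination (-16 * (v11 * v21)) * h
  have hD1pos : 0 < D1 := by
    rw [hc1e]
    linarith only [hK, mul_nonneg hv'.le (sq_nonneg (Real.cos (θ / 2)))]
  have hD2pos : 0 < D2 := by
    rw [hc2e]
    linarith only [hK, mul_nonneg hv'.le (sq_nonneg (Real.cos θ))]
  have hD3pos : 0 < D3 := by
    rw [hc3e]
    linarith only [hK, mul_nonneg hv'.le (sq_nonneg (Real.cos (3 * θ / 2)))]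
  have hS2 : S ^ 2 = (c1 - c2) ^ 2 + 4 * (c1 * c2) := by rw [hSdef]; ring
  -- √D1 < S
  have hr1 : Real.sqrt D1 < S := by
    have hlt2 : D1 < S ^ 2 := by
      rw [hc1e, hS2]
      linarith only [hprod, mul_nonneg hv'.le (sub_nonneg.2 (Real.cos_sq_le_one (θ / 2)))]
    have h := Real.sqrt_lt_sqrt hD1pos.le hlt2
    rwa [Real.sqrt_sq hsum.le] at h
  -- squares of A, B, C
  have hA2 : A ^ 2 = (S - Real.sqrt D1) / 2 := by
    rw [hAdef]; exact Real.sq_sqrt (by linarith only [hr1])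
  have hB2 : B ^ 2 = (S + Real.sqrt D2) / 2 := by
    rw [hBdef]; exact Real.sq_sqrt (by linarith only [Real.sqrt_nonneg D2, hsum])
  have hC2 : C ^ 2 = (S + Real.sqrt D3) / 2 := by
    rw [hCdef]; exact Real.sq_sqrt (by linarith only [Real.sqrt_nonneg D3, hsum])
  have hApos : 0 < A := by
    rw [hAdef]; exact Real.sqrt_pos.mpr (by linarith only [hr1])
  have hBpos : 0 < B := by
    rw [hBdef]; exact Real.sqrt_pos.mpr (by linarith only [Real.sqrt_nonneg D2, hsum])
  have hCpos : 0 < C := by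
    rw [hCdef]; exact Real.sqrt_pos.mpr (by linarith only [Real.sqrt_nonneg D3, hsum])
  -- B, C ≥ √S / 2
  have hsq4 : Real.sqrt (S * (1/2) ^ 2) = Real.sqrt S * (1/2) := by
    rw [Real.sqrt_mul hsum.le, Real.sqrt_sq (by norm_num : (0:ℝ) ≤ 1/2)]
  have hBge : Real.sqrt S * (1/2) ≤ B := by
    rw [← hsq4, hBdef]
    apply Real.sqrt_le_sqrt
    linarith only [Real.sqrt_nonneg D2, hsum]
  have hCge : Real.sqrt S * (1/2) ≤ C := by
    rw [← hsq4, hCdef]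
    apply Real.sqrt_le_sqrt
    linarith only [Real.sqrt_nonneg D3, hsum]
  have hbc : Real.sqrt S ≤ B + C := by linarith only [hBge, hCge]
  -- m = √(v11 v21)
  set m := Real.sqrt (v11 * v21) with hmdef
  have hmpos0 : 0 < m := Real.sqrt_pos.mpr hv'
  have hm20 : m ^ 2 = v11 * v21 := Real.sq_sqrt hv'.le
  clear_value m
  have hm2 : m ^ 2 = v11 * v21 := hm20
  have hmpos : 0 < m := hmpos0
  -- lower bounds on √D2, √D3
  have hDb : 4 * m * |Real.cos θ| ≤ Real.sqrt D2 := by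
    have e : (4 * m * |Real.cos θ|) ^ 2 = 16 * (v11 * v21) * Real.cos θ ^ 2 := by
      rw [mul_pow, mul_pow, sq_abs, hm2]; ring
    have h1 : (4 * m * |Real.cos θ|) ^ 2 ≤ D2 := by
      rw [hc2e, e]; linarith only [hK]
    calc 4 * m * |Real.cos θ| = Real.sqrt ((4 * m * |Real.cos θ|) ^ 2) :=
          (Real.sqrt_sq (mul_nonneg (by linarith only [hmpos]) (abs_nonneg _))).symm
      _ ≤ Real.sqrt D2 := Real.sqrt_le_sqrt h1
  have hDc : 4 * m * |Real.cos (3 * θ / 2)| ≤ Real.sqrt D3 := by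
    have e : (4 * m * |Real.cos (3 * θ / 2)|) ^ 2 = 16 * (v11 * v21) * Real.cos (3 * θ / 2) ^ 2 := by
      rw [mul_pow, mul_pow, sq_abs, hm2]; ring
    have h1 : (4 * m * |Real.cos (3 * θ / 2)|) ^ 2 ≤ D3 := by
      rw [hc3e, e]; linarith only [hK]
    calc 4 * m * |Real.cos (3 * θ / 2)| = Real.sqrt ((4 * m * |Real.cos (3 * θ / 2)|) ^ 2) :=
          (Real.sqrt_sq (mul_nonneg (by linarith only [hmpos]) (abs_nonneg _))).symm
      _ ≤ Real.sqrt D3 := Real.sqrt_le_sqrt h1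
  -- lower bound on A : S * A² > 4 v sin(θ/2)²
  have hpy : (v11 * v21) * Real.sin (θ / 2) ^ 2 + (v11 * v21) * Real.cos (θ / 2) ^ 2
      = v11 * v21 := by
    linear_combination (v11 * v21) * Real.sin_sq_add_cos_sq (θ / 2)
  have hr1sq : Real.sqrt D1 ^ 2 = D1 := Real.sq_sqrt hD1pos.le
  have ha4 : 4 * (v11 * v21) * Real.sin (θ / 2) ^ 2 < S * A ^ 2 := by
    rw [hA2]
    linarith only [sq_nonneg (S - Real.sqrt D1), hr1sq, hc1e, hS2, hpy, hprod]
  have haS : 2 * m * |Real.sin (θ / 2)| < Real.sqrt S * A := by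
    have e1 : (2 * m * |Real.sin (θ / 2)|) ^ 2 = 4 * (v11 * v21) * Real.sin (θ / 2) ^ 2 := by
      rw [mul_pow, mul_pow, sq_abs, hm2]; ring
    have e2 : (Real.sqrt S * A) ^ 2 = S * A ^ 2 := by
      rw [mul_pow, Real.sq_sqrt hsum.le]
    have h := ha4
    rw [← e1, ← e2] at h
    exact lt_of_pow_lt_pow_left₀ 2 (mul_nonneg (Real.sqrt_nonneg S) hApos.le) h
  -- trig identities
  have hq : Real.sin (5 * θ / 2)
      = Real.sin (3 * θ / 2) * Real.cos θ + Real.cos (3 * θ / 2) * Real.sin θ := by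
    rw [show 5 * θ / 2 = 3 * θ / 2 + θ by ring, Real.sin_add]
  have hqabs : |Real.sin (5 * θ / 2)| ≤ |Real.cos θ| + |Real.cos (3 * θ / 2)| := by
    rw [hq]
    have g1 : |Real.sin (3 * θ / 2)| * |Real.cos θ| ≤ 1 * |Real.cos θ| :=
      mul_le_mul_of_nonneg_right (Real.abs_sin_le_one _) (abs_nonneg _)
    have g2 : |Real.cos (3 * θ / 2)| * |Real.sin θ| ≤ |Real.cos (3 * θ / 2)| * 1 :=
      mul_le_mul_of_nonneg_left (Real.abs_sin_le_one _) (abs_nonneg _)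
    calc |Real.sin (3 * θ / 2) * Real.cos θ + Real.cos (3 * θ / 2) * Real.sin θ|
        ≤ |Real.sin (3 * θ / 2) * Real.cos θ| + |Real.cos (3 * θ / 2) * Real.sin θ| :=
          abs_add_le _ _
      _ = |Real.sin (3 * θ / 2)| * |Real.cos θ| + |Real.cos (3 * θ / 2)| * |Real.sin θ| := by
          rw [abs_mul, abs_mul]
      _ ≤ |Real.cos θ| + |Real.cos (3 * θ / 2)| := by linarith only [g1, g2]
  have hDdiff : D3 - D2
      = -16 * (v11 * v21) * (Real.sin (5 * θ / 2) * Real.sin (θ / 2)) := by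
    have h := Real.cos_sub_cos (3 * θ) (2 * θ)
    rw [show (3 * θ + 2 * θ) / 2 = 5 * θ / 2 by ring,
        show (3 * θ - 2 * θ) / 2 = θ / 2 by ring] at h
    rw [hD2def, hD3def]
    linear_combination 8 * (v11 * v21) * h
  have hXpos : 0 < Real.sqrt D2 + Real.sqrt D3 := by
    have h := Real.sqrt_pos.mpr hD2pos
    linarith only [h, Real.sqrt_nonneg D3]
  -- core inequality
  have hcore : D3 - D2 < 2 * A * (B + C) * (Real.sqrt D2 + Real.sqrt D3) := by
    rw [hDdiff]
    have hP : 0 ≤ |Real.cos θ| + |Real.cos (3 * θ / 2)| := by positivity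
    rcases eq_or_lt_of_le hP with h0 | hPpos
    · -- both cosines vanish, so sin(5θ/2) = 0
      have hu : Real.cos θ = 0 := by
        rw [← abs_eq_zero]
        have g1 := abs_nonneg (Real.cos θ)
        have g2 := abs_nonneg (Real.cos (3 * θ / 2))
        linarith only [g1, g2, h0]
      have hw : Real.cos (3 * θ / 2) = 0 := by
        rw [← abs_eq_zero]
        have g1 := abs_nonneg (Real.cos θ)
        have g2 := abs_nonneg (Real.cos (3 * θ / 2))
        linarith only [g1, g2, h0]
      have hq0 : Real.sin (5 * θ / 2) = 0 := by rw [hq, hu, hw]; ring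
      rw [hq0]
      have hpos : 0 < 2 * A * (B + C) * (Real.sqrt D2 + Real.sqrt D3) :=
        mul_pos (mul_pos (by linarith only [hApos]) (by linarith only [hBpos, hCpos])) hXpos
      linarith only [hpos]
    · -- main case
      have step1 : 4 * m * (|Real.cos θ| + |Real.cos (3 * θ / 2)|)
          ≤ Real.sqrt D2 + Real.sqrt D3 := by linarith only [hDb, hDc]
      have hqs : -(Real.sin (5 * θ / 2) * Real.sin (θ / 2))
          ≤ (|Real.cos θ| + |Real.cos (3 * θ / 2)|) * |Real.sin (θ / 2)| := by
        calc -(Real.sin (5 * θ / 2) * Real.sin (θ / 2))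
            ≤ |Real.sin (5 * θ / 2) * Real.sin (θ / 2)| := neg_le_abs _
          _ = |Real.sin (5 * θ / 2)| * |Real.sin (θ / 2)| := abs_mul _ _
          _ ≤ (|Real.cos θ| + |Real.cos (3 * θ / 2)|) * |Real.sin (θ / 2)| :=
              mul_le_mul_of_nonneg_right hqabs (abs_nonneg _)
      have c1' : -16 * (v11 * v21) * (Real.sin (5 * θ / 2) * Real.sin (θ / 2))
          ≤ 16 * (v11 * v21) * ((|Real.cos θ| + |Real.cos (3 * θ / 2)|) * |Real.sin (θ / 2)|) := by
        linarith only [mul_le_mul_of_nonneg_left hqs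
          (by linarith only [hv'] : (0:ℝ) ≤ 16 * (v11 * v21))]
      have c2' : 16 * (v11 * v21) * ((|Real.cos θ| + |Real.cos (3 * θ / 2)|) * |Real.sin (θ / 2)|)
          < 2 * A * (B + C) * (Real.sqrt D2 + Real.sqrt D3) := by
        have e0 : 16 * (v11 * v21) * ((|Real.cos θ| + |Real.cos (3 * θ / 2)|) * |Real.sin (θ / 2)|)
            = (8 * m * (|Real.cos θ| + |Real.cos (3 * θ / 2)|)) * (2 * m * |Real.sin (θ / 2)|) := by
          linear_combination (-16 * (|Real.cos θ| + |Real.cos (3 * θ / 2)|) * |Real.sin (θ / 2)|) * hm2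
        rw [e0]
        have s1 : (8 * m * (|Real.cos θ| + |Real.cos (3 * θ / 2)|)) * (2 * m * |Real.sin (θ / 2)|)
            < (8 * m * (|Real.cos θ| + |Real.cos (3 * θ / 2)|)) * (Real.sqrt S * A) :=
          mul_lt_mul_of_pos_left haS (mul_pos (by linarith only [hmpos] : (0:ℝ) < 8 * m) hPpos)
        have s2 : (8 * m * (|Real.cos θ| + |Real.cos (3 * θ / 2)|)) * (Real.sqrt S * A)
            ≤ 2 * A * (B + C) * (4 * m * (|Real.cos θ| + |Real.cos (3 * θ / 2)|)) := by
          linarith only [mul_le_mul_of_nonneg_left hbc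
            (mul_nonneg (by linarith only [hApos] : (0:ℝ) ≤ 2 * A)
              (mul_nonneg (by linarith only [hmpos] : (0:ℝ) ≤ 4 * m) hP))]
        have s3 : 2 * A * (B + C) * (4 * m * (|Real.cos θ| + |Real.cos (3 * θ / 2)|))
            ≤ 2 * A * (B + C) * (Real.sqrt D2 + Real.sqrt D3) :=
          mul_le_mul_of_nonneg_left step1
            (mul_nonneg (by linarith only [hApos] : (0:ℝ) ≤ 2 * A)
              (by linarith only [hBpos, hCpos]))
        linarith only [s1, s2, s3]
      linarith only [c1', c2']
  -- convert to √D3 - √D2 < 2A(B+C)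
  have e3 : D3 - D2 = (Real.sqrt D3 - Real.sqrt D2) * (Real.sqrt D2 + Real.sqrt D3) := by
    linear_combination Real.sq_sqrt hD2pos.le - Real.sq_sqrt hD3pos.le
  have h1 : Real.sqrt D3 - Real.sqrt D2 < 2 * A * (B + C) := by
    have h1' : (Real.sqrt D3 - Real.sqrt D2) * (Real.sqrt D2 + Real.sqrt D3)
        < (2 * A * (B + C)) * (Real.sqrt D2 + Real.sqrt D3) := by
      rw [← e3]; exact hcore
    exact (mul_lt_mul_iff_left₀ hXpos).mp h1'
  -- finish: C² - B² = (√D3 - √D2)/2 < A(B+C), hence C - B < A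
  have h2 : (C - B) * (B + C) < A * (B + C) := by
    have e4 : C ^ 2 - B ^ 2 = (Real.sqrt D3 - Real.sqrt D2) / 2 := by
      rw [hB2, hC2]; ring
    linarith only [h1, e4]
  have h3 : C - B < A := (mul_lt_mul_iff_left₀ (by linarith only [hBpos, hCpos] : (0:ℝ) < B + C)).mp h2
  linarith only [h3]
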